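/- The only alternal moulds concentrated in depth r whose value is a linear form a_1 u_1 + ··· + a_r u_r divided by u_1···u_r times a fixed scalar — equivalently, the only linear forms L(u) = a_1u_1+···+a_ru_r such that the mould M(u_1,...,u_r) = L(u) satisfies all shuffle relations Σ_{w∈sh(u',u'')} M(w) = 0 — are the scalar multiples of Σ_{i=1}^{r} (−1)^{i−1} binom(r−1, i−1) u_i. -/

import Mathlib

/-- The list of all shuffles (with multiplicity) of two words. -/
def shuffles {α : Type*} : List α → List α → List (List α)
  | [], ys => [ys]
  | x :: xs, [] => [x :: xs]
  | x :: xs, y :: ys =>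
      ((shuffles xs (y :: ys)).map (x :: ·)) ++ ((shuffles (x :: xs) ys).map (y :: ·))
termination_by u v => u.length + v.length

/-- The linear form with coefficient list `a`, as a mould: `M(u₁,…,u_r) = a₁u₁ + ⋯ + a_ru_r`. -/
def linMould (a : List ℚ) : List ℚ → ℚ := fun l => (List.zipWith (· * ·) a l).sum

open Finset

lemma linMould_cons' (a : List ℚ) (x : ℚ) (l : List ℚ) :
    linMould a (x :: l) = a.getD 0 0 * x + linMould a.tail l := by
  cases a with
  | nil => simp [linMould]
  | cons b bs => simp [linMould]

lemma getD_tail (a : List ℚ) (j : ℕ) : a.tail.getD j 0 = a.getD (j+1) 0 := by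
  cases a <;> simp

lemma linMould_eq_sum (l : List ℚ) : ∀ a : List ℚ,
    linMould a l = ∑ j ∈ range l.length, l.getD j 0 * a.getD j 0 := by
  induction l with
  | nil => intro a; simp [linMould]
  | cons x l ih =>
    intro a
    rw [linMould_cons', List.length_cons, Finset.sum_range_succ', ih]
    simp only [getD_tail, List.getD_cons_succ, List.getD_cons_zero]
    ring

lemma shuffles_length {α : Type*} : ∀ u v : List α,
    (shuffles u v).length = Nat.choose (u.length + v.length) u.length
  | [], ys => by simp [shuffles]
  | x :: xs, [] => by simp [shuffles]
  | x :: xs, y :: ys => by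
    rw [shuffles]
    simp only [List.length_append, List.length_map,
      shuffles_length xs (y :: ys), shuffles_length (x :: xs) ys, List.length_cons]
    rw [show xs.length + 1 + (ys.length + 1) = (xs.length + (ys.length + 1)) + 1 by ring,
      Nat.choose_succ_succ]
    congr 1
    rw [show xs.length + (ys.length + 1) = xs.length + 1 + ys.length by ring]
termination_by u v => u.length + v.length

lemma sum_map_const_add {α : Type*} (L : List α) (c : ℚ) (g : α → ℚ) :
    (L.map (fun w => c + g w)).sum = L.length * c + (L.map g).sum := by
  induction L with
  | nil => simp
  | cons h t ih => simp [ih]; ring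

def Wc (a : List ℚ) (p q j : ℕ) : ℚ :=
  ∑ i ∈ range (p+q), a.getD i 0 * (Nat.choose i j) * (Nat.choose (p+q-1-i) (p-1-j))

lemma Wc_zero_right (a : List ℚ) (p j : ℕ) (hj : j < p) : Wc a p 0 j = a.getD j 0 := by
  rw [Wc]
  rw [Finset.sum_eq_single j]
  · simp
  · intro i hi hne
    rcases lt_or_gt_of_ne hne with h | h
    · simp [Nat.choose_eq_zero_of_lt h]
    · rw [Nat.choose_eq_zero_of_lt (show p + 0 - 1 - i < p - 1 - j by
        simp at hi; omega)]
      simp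
  · intro h; simp at h; omega

lemma Wc_I0 (a₀ : ℚ) (a' : List ℚ) (p q : ℕ) :
    Wc (a₀ :: a') (p+1) (q+1) 0
      = a₀ * Nat.choose (p+q+1) p + Wc a' (p+1) q 0 := by
  rw [Wc, Wc]
  rw [show p + 1 + (q + 1) = (p + 1 + q) + 1 by ring, Finset.sum_range_succ']
  simp only [List.getD_cons_zero, List.getD_cons_succ, Nat.choose_zero_right, Nat.cast_one]
  rw [add_comm]
  congr 1
  · rw [show p+1+q+1-1-0 = p+q+1 by omega, show p+1-1-0 = p by omega]
    ring
  · apply Finset.sum_congr rfl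
    intro i hi
    rw [show p+1+q+1-1-(i+1) = p+1+q-1-i by omega]

lemma Wc_I1 (a₀ : ℚ) (a' : List ℚ) (p q j : ℕ) (hj : j < p) :
    Wc (a₀ :: a') (p+1) (q+1) (j+1)
      = Wc a' p (q+1) j + Wc a' (p+1) q (j+1) := by
  rw [Wc, Wc, Wc]
  rw [show p + 1 + (q + 1) = (p + 1 + q) + 1 by ring, Finset.sum_range_succ']
  simp only [List.getD_cons_zero, List.getD_cons_succ, Nat.choose_succ_succ,
    Nat.choose_zero_succ, Nat.cast_zero, Nat.cast_add, mul_zero, zero_mul, add_zero]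
  rw [Finset.sum_congr rfl (fun x _ => show
      a'.getD x 0 * (↑(x.choose j) + ↑(x.choose (j+1))) * ↑((p + 1 + q + 1 - 1 - (x + 1)).choose (p + 1 - 1 - (j + 1)))
      = a'.getD x 0 * ↑(x.choose j) * ↑((p + 1 + q + 1 - 1 - (x + 1)).choose (p + 1 - 1 - (j + 1)))
      + a'.getD x 0 * ↑(x.choose (j+1)) * ↑((p + 1 + q + 1 - 1 - (x + 1)).choose (p + 1 - 1 - (j + 1))) from by ring),
    Finset.sum_add_distrib]
  congr 1
  · apply Finset.sum_congr (by rw [show p+1+q = p+(q+1) by ring])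
    intro i hi
    rw [show p+1+q+1-1-(i+1) = p+(q+1)-1-i by omega, show p+1-1-(j+1) = p-1-j by omega]
  · apply Finset.sum_congr rfl
    intro i hi
    rw [show p+1+q+1-1-(i+1) = p+1+q-1-i by omega]

lemma Wc_head_tail (a : List ℚ) (p q j : ℕ) :
    Wc a p q j = Wc (a.getD 0 0 :: a.tail) p q j := by
  unfold Wc
  apply Finset.sum_congr rfl
  intro i hi
  congr 1
  · congr 1
    cases a <;> cases i <;> simp
  
lemma Wc_I0' (a : List ℚ) (p q : ℕ) :
    Wc a (p+1) (q+1) 0 = a.getD 0 0 * Nat.choose (p+q+1) p + Wc a.tail (p+1) q 0 := by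
  conv_lhs => rw [Wc_head_tail]
  rw [Wc_I0]

lemma Wc_I1' (a : List ℚ) (p q j : ℕ) (hj : j < p) :
    Wc a (p+1) (q+1) (j+1) = Wc a.tail p (q+1) j + Wc a.tail (p+1) q (j+1) := by
  conv_lhs => rw [Wc_head_tail]
  rw [Wc_I1 _ _ _ _ _ hj]

theorem mainFormula : ∀ (u v a : List ℚ),
    ((shuffles u v).map (linMould a)).sum
      = (∑ j ∈ range u.length, u.getD j 0 * Wc a u.length v.length j)
      + (∑ j ∈ range v.length, v.getD j 0 * Wc a v.length u.length j)
  | [], v, a => by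
    rw [shuffles]
    simp only [List.map_cons, List.map_nil, List.sum_cons, List.sum_nil, add_zero,
      List.length_nil, Finset.range_zero, Finset.sum_empty, zero_add]
    rw [linMould_eq_sum]
    exact Finset.sum_congr rfl fun j hj => by
      rw [Wc_zero_right _ _ _ (Finset.mem_range.mp hj)]
  | x :: xs, [], a => by
    rw [shuffles]
    simp only [List.map_cons, List.map_nil, List.sum_cons, List.sum_nil, add_zero,
      List.length_nil, Finset.range_zero, Finset.sum_empty]
    rw [linMould_eq_sum]
    exact Finset.sum_congr rfl fun j hj => by
      rw [Wc_zero_right _ _ _ (Finset.mem_range.mp hj)]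
  | x :: xs, y :: ys, a => by
    have h1 := mainFormula xs (y :: ys) a.tail
    have h2 := mainFormula (x :: xs) ys a.tail
    rw [shuffles]
    rw [List.map_append, List.sum_append, List.map_map, List.map_map]
    have e1 : (linMould a ∘ (x :: ·)) = fun w => a.getD 0 0 * x + linMould a.tail w := by
      funext w; simp [linMould_cons']
    have e2 : (linMould a ∘ (y :: ·)) = fun w => a.getD 0 0 * y + linMould a.tail w := by
      funext w; simp [linMould_cons']
    rw [e1, e2, sum_map_const_add, sum_map_const_add, h1, h2,
      shuffles_length, shuffles_length]
    set p := xs.length with hp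
    set q := ys.length with hq
    simp only [List.length_cons]
    -- peel sums
    rw [Finset.sum_range_succ' (fun j => (x :: xs).getD j 0 * Wc a (p+1) (q+1) j),
      Finset.sum_range_succ' (fun j => (y :: ys).getD j 0 * Wc a (q+1) (p+1) j),
      Finset.sum_range_succ' (fun j => (y :: ys).getD j 0 * Wc a.tail (q+1) p j),
      Finset.sum_range_succ' (fun j => (x :: xs).getD j 0 * Wc a.tail (p+1) q j)]
    simp only [List.getD_cons_succ, List.getD_cons_zero]
    have key1 : ∑ j ∈ range p, xs.getD j 0 * Wc a (p+1) (q+1) (j+1)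
        = ∑ j ∈ range p, (xs.getD j 0 * Wc a.tail p (q+1) j
            + xs.getD j 0 * Wc a.tail (p+1) q (j+1)) :=
      Finset.sum_congr rfl (fun j hj => by
        rw [Wc_I1' a p q j (Finset.mem_range.mp hj), mul_add])
    have key2 : ∑ j ∈ range q, ys.getD j 0 * Wc a (q+1) (p+1) (j+1)
        = ∑ j ∈ range q, (ys.getD j 0 * Wc a.tail q (p+1) j
            + ys.getD j 0 * Wc a.tail (q+1) p (j+1)) :=
      Finset.sum_congr rfl (fun j hj => by
        rw [Wc_I1' a q p j (Finset.mem_range.mp hj), mul_add])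
    rw [key1, key2, Wc_I0' a p q, Wc_I0' a q p,
      show q+p+1 = p+q+1 by ring,
      show Nat.choose (p+q+1) q = Nat.choose (p+q+1) (p+1) from
        Nat.choose_symm_of_eq_add (by ring),
      Finset.sum_add_distrib, Finset.sum_add_distrib]
    rw [show p + (q+1) = p+q+1 by ring, show p+1+q = p+q+1 by ring]
    ring

lemma alt_sum (K N : ℕ) (hK : K ≠ 0) (hKN : K ≤ N) :
    ∑ m ∈ range (N+1), (-1:ℚ)^m * (K.choose m) = 0 := by
  rw [← Finset.sum_subset (Finset.range_subset_range.mpr (by omega) : range (K+1) ⊆ range (N+1))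
    (fun m _ hm => by
      rw [Nat.choose_eq_zero_of_lt (by simp at hm ⊢; omega)]
      simp)]
  have h := Int.alternating_sum_range_choose_of_ne hK
  have h2 : ((∑ i ∈ range (K+1), ((-1)^i * K.choose i : ℤ) : ℤ) : ℚ) = 0 := by
    rw [h]; simp
  exact_mod_cast h2

lemma trinom (M m t : ℕ) : M.choose m * (M-m).choose t = M.choose t * (M-t).choose m := by
  by_cases h : m + t ≤ M
  · have h1 : M.choose (m+t) * (m+t).choose m = M.choose m * (M-m).choose ((m+t)-m) :=
      Nat.choose_mul (by omega)
    have h2 : M.choose (m+t) * (m+t).choose t = M.choose t * (M-t).choose ((m+t)-t) :=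
      Nat.choose_mul (by omega)
    rw [show m+t-m = t by omega] at h1
    rw [show m+t-t = m by omega] at h2
    rw [← h1, ← h2, Nat.choose_symm_add]
  · by_cases hm : m ≤ M
    · by_cases ht : t ≤ M
      · rw [Nat.choose_eq_zero_of_lt (show M - m < t by omega),
          Nat.choose_eq_zero_of_lt (show M - t < m by omega)]
        simp
      · rw [Nat.choose_eq_zero_of_lt (show M - m < t by omega),
          Nat.choose_eq_zero_of_lt (show M < t by omega)]
        simp
    · rw [Nat.choose_eq_zero_of_lt (show M < m by omega),
        Nat.choose_eq_zero_of_lt (show M - t < m by omega)]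
      simp

lemma binom_vanish (n s t : ℕ) (h : s + t < n) :
    ∑ i ∈ range (n+1), (-1:ℚ)^i * (n.choose i) * (i.choose s) * ((n-i).choose t) = 0 := by
  have hsub : Finset.Ico s (n+1) ⊆ range (n+1) := by
    rw [Finset.range_eq_Ico]
    exact Finset.Ico_subset_Ico (Nat.zero_le s) le_rfl
  rw [← Finset.sum_subset hsub (fun i hi hni => by
    have : i < s := by
      simp only [Finset.mem_Ico, Finset.mem_range, not_and, not_le] at hi hni ⊢
      omega
    rw [Nat.choose_eq_zero_of_lt this]
    simp)]
  rw [Finset.sum_Ico_eq_sum_range, show n + 1 - s = (n-s) + 1 by omega]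
  have step : ∀ m ∈ range ((n-s)+1),
      (-1:ℚ)^(s+m) * (n.choose (s+m)) * ((s+m).choose s) * ((n-(s+m)).choose t)
      = ((-1:ℚ)^s * (n.choose s) * ((n-s).choose t)) * ((-1:ℚ)^m * ((n-s-t).choose m)) := by
    intro m hm
    simp only [Finset.mem_range] at hm
    have h1 : n.choose (s+m) * (s+m).choose s = n.choose s * (n-s).choose m := by
      rw [Nat.choose_mul (by omega), show s+m-s = m by omega]
    have h2 : (n-s).choose m * ((n-s)-m).choose t = (n-s).choose t * ((n-s)-t).choose m :=
      trinom (n-s) m t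
    have h1' : ((n.choose (s+m)):ℚ) * ((s+m).choose s) = (n.choose s) * ((n-s).choose m) := by
      exact_mod_cast h1
    have h2' : (((n-s).choose m):ℚ) * (((n-s)-m).choose t)
        = ((n-s).choose t) * (((n-s)-t).choose m) := by
      exact_mod_cast h2
    rw [show n - (s+m) = n-s-m by omega]
    linear_combination ((-1:ℚ)^(s+m) * (((n-s-m).choose t) : ℚ)) * h1'
      + ((-1:ℚ)^(s+m) * ((n.choose s) : ℚ)) * h2'
  rw [Finset.sum_congr rfl step, ← Finset.mul_sum,
    alt_sum (n-s-t) (n-s) (by omega) (by omega), mul_zero]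

lemma getD_map_range (r : ℕ) (f : ℕ → ℚ) (i : ℕ) (hi : i < r) :
    ((List.range r).map f).getD i 0 = f i := by
  rw [List.getD_eq_getElem _ _ (by simpa using hi)]
  simp

lemma Wc_vanish (r : ℕ) (c : ℚ) (p q j : ℕ) (hpq : p + q = r) (hp : 0 < p) (hplt : p < r)
    (hj : j < p) :
    Wc ((List.range r).map fun i => c * (-1:ℚ)^i * ((r-1).choose i)) p q j = 0 := by
  rw [Wc, hpq]
  have hr : r = (r-1) + 1 := by omega
  calc ∑ i ∈ range r,
        (((List.range r).map fun i => c * (-1:ℚ)^i * ((r-1).choose i)).getD i 0)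
          * (i.choose j) * ((r-1-i).choose (p-1-j))
      = ∑ i ∈ range r, c * ((-1:ℚ)^i * ((r-1).choose i) * (i.choose j)
          * (((r-1)-i).choose (p-1-j))) := by
        apply Finset.sum_congr rfl
        intro i hi
        rw [getD_map_range r _ i (Finset.mem_range.mp hi)]
        ring
    _ = c * ∑ i ∈ range ((r-1)+1), (-1:ℚ)^i * ((r-1).choose i) * (i.choose j)
          * (((r-1)-i).choose (p-1-j)) := by
        rw [← Finset.mul_sum, ← hr]
    _ = 0 := by
        rw [binom_vanish (r-1) j (p-1-j) (by omega), mul_zero]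

/-- a linear form `L(u) = a₁u₁+⋯+a_ru_r`, viewed as a mould concentrated in
depth `r`, satisfies all the shuffle (alternality) relations if and only if it is a scalar
multiple of `Σᵢ (−1)^(i−1) C(r−1, i−1) uᵢ`. -/
theorem linear_alternal_mould_classification (r : ℕ) (a : List ℚ) (ha : a.length = r) :
    (∀ k : ℕ, 0 < k → k < r → ∀ x : List ℚ, x.length = r →
        ((shuffles (x.take k) (x.drop k)).map (linMould a)).sum = 0) ↔
    (∃ c : ℚ, a = (List.range r).map (fun i => c * (-1 : ℚ) ^ i * ((r - 1).choose i))) := by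
  constructor
  · intro h
    rcases Nat.lt_or_ge r 2 with hr2 | hr2
    · -- r = 0 or r = 1
      interval_cases r
      · exact ⟨0, by simpa using List.length_eq_zero_iff.mp ha⟩
      · obtain ⟨b, rfl⟩ := List.length_eq_one_iff.mp ha
        exact ⟨b, by simp [List.range_succ]⟩
    · have key : ∀ m, m < r - 1 → Wc a (r-1) 1 m = 0 := by
        intro m hm
        set x := (List.range r).map (fun i => if i = m then (1:ℚ) else 0) with hxdef
        have hx : x.length = r := by simp [hxdef]
        have h0 := h (r-1) (by omega) (by omega) x hx
        rw [mainFormula] at h0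
        rw [List.length_take, List.length_drop, hx, min_eq_left (by omega : r - 1 ≤ r),
          show r - (r-1) = 1 by omega] at h0
        have e1 : ∀ j ∈ range (r-1),
            (x.take (r-1)).getD j 0 * Wc a (r-1) 1 j
            = (if j = m then (1:ℚ) else 0) * Wc a (r-1) 1 j := by
          intro j hj
          simp only [Finset.mem_range] at hj
          rw [List.getD_eq_getElem _ _ (by rw [List.length_take, hx]; omega)]
          congr 1
          simp [hxdef]
        have e2 : (x.drop (r-1)).getD 0 0 = 0 := by
          rw [List.getD_eq_getElem _ _ (by rw [List.length_drop, hx]; omega)]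
          simp only [List.getElem_drop, hxdef]
          rw [List.getElem_map]
          simp only [List.getElem_range]
          rw [if_neg (by omega)]
        rw [Finset.sum_congr rfl e1, Finset.sum_range_one, e2, zero_mul, add_zero] at h0
        simp only [ite_mul, one_mul, zero_mul] at h0
        rwa [Finset.sum_ite_eq' (range (r-1)) m, if_pos (Finset.mem_range.mpr hm)] at h0
      have hrec : ∀ s, s < r - 1 →
          ((r-1-s : ℕ) : ℚ) * a.getD s 0 + ((s+1 : ℕ) : ℚ) * a.getD (s+1) 0 = 0 := by
        intro s hs
        have hk := key s hs
        rw [Wc, show r - 1 + 1 = r by omega] at hk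
        have hsub : ({s, s+1} : Finset ℕ) ⊆ range r := by
          intro i hi
          simp only [Finset.mem_insert, Finset.mem_singleton] at hi
          simp only [Finset.mem_range]
          omega
        rw [← Finset.sum_subset hsub (fun i hi hni => by
          simp only [Finset.mem_insert, Finset.mem_singleton, not_or] at hni
          simp only [Finset.mem_range] at hi
          rcases Nat.lt_or_ge i s with hlt | hge
          · rw [Nat.choose_eq_zero_of_lt hlt]
            simp
          · rw [Nat.choose_eq_zero_of_lt (show r - 1 - i < r - 1 - 1 - s by omega)]
            simp)] at hk
        rw [Finset.sum_pair (by omega : s ≠ s + 1)] at hk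
        rw [Nat.choose_self, show r - 1 - s = (r-1-1-s)+1 by omega,
          Nat.choose_succ_self_right, Nat.choose_succ_self_right,
          show r - 1 - (s+1) = r-1-1-s by omega, Nat.choose_self] at hk
        rw [show r - 1 - s = (r-1-1-s)+1 by omega]
        push_cast at hk ⊢
        linarith
      have hform : ∀ i, i < r → a.getD i 0 = a.getD 0 0 * (-1)^i * ((r-1).choose i) := by
        intro i
        induction i with
        | zero => intro _; simp
        | succ i ih =>
          intro hi
          have hi' : i < r - 1 := by omega
          have h1 := hrec i hi'
          have h2 := ih (by omega)
          have hch : ((r-1).choose (i+1)) * (i+1) = (r-1).choose i * ((r-1) - i) :=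
            Nat.choose_succ_right_eq (r-1) i
          have hch' : (((r-1).choose (i+1)):ℚ) * ((i:ℚ)+1)
              = ((r-1).choose i) * ((r-1-i : ℕ):ℚ) := by
            exact_mod_cast hch
          have hne : ((i:ℚ)+1) ≠ 0 := by positivity
          apply mul_left_cancel₀ hne
          push_cast at h1
          linear_combination h1 - ((r-1-i : ℕ):ℚ) * h2 - a.getD 0 0 * (-1:ℚ)^(i+1) * hch'
      refine ⟨a.getD 0 0, ?_⟩
      apply List.ext_getElem (by simp [ha])
      intro i h1 h2
      rw [List.getElem_map, List.getElem_range]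
      rw [← List.getD_eq_getElem a 0 h1]
      exact hform i (by rw [ha] at h1; exact h1)
  · rintro ⟨c, rfl⟩ k hk hkr x hx
    rw [mainFormula]
    rw [List.length_take, List.length_drop, hx, min_eq_left (le_of_lt hkr)]
    have hlen : ((List.range r).map fun i => c * (-1:ℚ)^i * ((r-1).choose i)).length = r := by
      simp
    rw [Finset.sum_eq_zero (fun j hj => by
        rw [Wc_vanish r c k (r-k) j (by omega) hk hkr (Finset.mem_range.mp hj), mul_zero]),
      Finset.sum_eq_zero (fun j hj => by
        rw [Wc_vanish r c (r-k) k j (by omega) (by omega) (by omega) (Finset.mem_range.mp hj),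
          mul_zero]),
      add_zero]
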